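/- Let Γ̃ be a grading of K[u,v] by an abelian group with u and v homogeneous. Let ξ₁ be a Γ̃-graded elementary automorphism of K[u,v] and ξ₂ a Γ̃-graded linear automorphism of K[u,v]. Then ξ₂∘ξ₁ = ζ₂∘ζ₁∘ζ₀, where ζ₀ and ζ₂ are Γ̃-graded linear automorphisms, ζ₁ is a Γ̃-graded elementary automorphism, and ζ₂(u) = λu for some nonzero λ ∈ K. -/

import Mathlib

open MvPolynomial

/-- An automorphism of `K[u,v]` is *elementary* if it sends one variable `w` to `w + F`
for a polynomial `F` in the other variable and fixes the other variable. -/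
def IsElementary {K : Type*} [CommRing K]
    (φ : MvPolynomial (Fin 2) K ≃ₐ[K] MvPolynomial (Fin 2) K) : Prop :=
  ∃ (i : Fin 2) (F : MvPolynomial (Fin 2) K), i ∉ F.vars ∧
    φ (X i) = X i + F ∧ ∀ j : Fin 2, j ≠ i → φ (X j) = X j

/-- An automorphism of `K[u,v]` is *linear* if it sends each variable to a `K`-linear
combination of the variables. -/
def IsLinearAut {K : Type*} [CommRing K]
    (φ : MvPolynomial (Fin 2) K ≃ₐ[K] MvPolynomial (Fin 2) K) : Prop :=
  ∀ i : Fin 2, ∃ c : Fin 2 → K, φ (X i) = ∑ j : Fin 2, C (c j) * X j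

/-- For a grading of `K[u,v]` by an abelian group with homogeneous variables of degrees
`w 0`, `w 1`, an automorphism is *graded* if it maps each homogeneous component into itself. -/
def IsGraded {K : Type*} [CommRing K] {G : Type*} [AddCommGroup G] (w : Fin 2 → G)
    (φ : MvPolynomial (Fin 2) K ≃ₐ[K] MvPolynomial (Fin 2) K) : Prop :=
  ∀ (g : G) (f : MvPolynomial (Fin 2) K),
    f.IsWeightedHomogeneous w g → (φ f).IsWeightedHomogeneous w g

section AuxLemmas

variable {K : Type*} [Field K] {G : Type*} [AddCommGroup G] {w : Fin 2 → G}

variable {K : Type*} [Field K] {G : Type*} [AddCommGroup G] {w : Fin 2 → G}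

section Defs

/-- Two substitutions that are mutually inverse give an automorphism. -/
noncomputable def autOfSubst (f g : Fin 2 → MvPolynomial (Fin 2) K)
    (hfg : ∀ k, aeval f (g k) = X k) (hgf : ∀ k, aeval g (f k) = X k) :
    MvPolynomial (Fin 2) K ≃ₐ[K] MvPolynomial (Fin 2) K :=
  AlgEquiv.ofAlgHom (aeval f) (aeval g)
    (by apply MvPolynomial.algHom_ext; intro k; simp only [AlgHom.comp_apply, aeval_X, AlgHom.id_apply]; exact hfg k)
    (by apply MvPolynomial.algHom_ext; intro k; simp only [AlgHom.comp_apply, aeval_X, AlgHom.id_apply]; exact hgf k)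

@[simp] lemma autOfSubst_apply (f g : Fin 2 → MvPolynomial (Fin 2) K)
    (hfg hgf) (p : MvPolynomial (Fin 2) K) :
    autOfSubst f g hfg hgf p = aeval f p := rfl

@[simp] lemma autOfSubst_symm_apply (f g : Fin 2 → MvPolynomial (Fin 2) K)
    (hfg hgf) (p : MvPolynomial (Fin 2) K) :
    (autOfSubst f g hfg hgf).symm p = aeval g p := rfl

lemma algEquiv_C (φ : MvPolynomial (Fin 2) K ≃ₐ[K] MvPolynomial (Fin 2) K) (a : K) :
    φ (C a) = C a := by
  simpa [algebraMap_eq] using φ.commutes a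

end Defs

section Graded

lemma isGraded'_mul {φ ψ : MvPolynomial (Fin 2) K ≃ₐ[K] MvPolynomial (Fin 2) K} (hφ : IsGraded w φ) (hψ : IsGraded w ψ) : IsGraded w (φ * ψ) :=
  fun g f hf => hφ g _ (hψ g f hf)

lemma whPow {p : MvPolynomial (Fin 2) K} {m : G}
    (hp : p.IsWeightedHomogeneous w m) (n : ℕ) : (p ^ n).IsWeightedHomogeneous w (n • m) := by
  have := IsWeightedHomogeneous.prod (Finset.range n) (fun _ => p) (fun _ => m)
    (w := w) (fun _ _ => hp)
  simpa [Finset.prod_const, Finset.sum_const] using this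

lemma isGraded'_of_X (φ : MvPolynomial (Fin 2) K ≃ₐ[K] MvPolynomial (Fin 2) K)
    (h : ∀ k, (φ (X k)).IsWeightedHomogeneous w (w k)) : IsGraded w φ := by
  intro g f hf
  rw [f.as_sum, map_sum]
  apply IsWeightedHomogeneous.sum
  intro d hd
  have hw : (Finsupp.weight w) d = g := hf (mem_support_iff.mp hd)
  rw [monomial_eq, map_mul, algEquiv_C]
  have h2 : IsWeightedHomogeneous w (φ (d.prod fun n e => X n ^ e))
      (∑ k ∈ d.support, (d k) • w k) := by
    rw [Finsupp.prod, map_prod]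
    apply IsWeightedHomogeneous.prod
    intro k _
    simpa using whPow (h k) (d k)
  have h3 := (isWeightedHomogeneous_C w (coeff d f)).mul h2
  rw [zero_add] at h3
  convert h3 using 2
  case e'_3 => rfl
  rw [← hw, Finsupp.weight_apply, Finsupp.sum]

lemma isGraded'_symm {φ : MvPolynomial (Fin 2) K ≃ₐ[K] MvPolynomial (Fin 2) K} (h : IsGraded w φ) : IsGraded w φ.symm := by
  intro g f hf
  set p := φ.symm f with hp
  have hfin := weightedHomogeneousComponent_finsupp (w := w) (φ := p)
  have hmap : ∀ n : G, weightedHomogeneousComponent w n f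
      = φ (weightedHomogeneousComponent w n p) := by
    intro n
    have h1 : f = ∑ᶠ m, φ (weightedHomogeneousComponent w m p) := by
      conv_lhs => rw [show f = φ p from (φ.apply_symm_apply f).symm,
        ← sum_weightedHomogeneousComponent w p]
      exact (φ.toAlgHom.toLinearMap.toAddMonoidHom.map_finsum hfin)
    have hfin2 : (Function.support fun m => φ (weightedHomogeneousComponent w m p)).Finite := by
      apply hfin.subset
      intro m hm
      simp only [Function.mem_support] at hm ⊢
      intro h0
      exact hm (by rw [h0, map_zero])
    rw [h1]
    have h2 : (weightedHomogeneousComponent w n)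
          (∑ᶠ (m : G), φ ((weightedHomogeneousComponent w m) p))
        = ∑ᶠ (m : G), (weightedHomogeneousComponent w n)
            (φ ((weightedHomogeneousComponent w m) p)) :=
      (weightedHomogeneousComponent w n).toAddMonoidHom.map_finsum hfin2
    rw [h2, finsum_eq_single _ n]
    · exact (h _ _ (weightedHomogeneousComponent_isWeightedHomogeneous n p)
        ).weightedHomogeneousComponent_same
    · intro m hmn
      exact (h _ _ (weightedHomogeneousComponent_isWeightedHomogeneous m p)
        ).weightedHomogeneousComponent_ne n hmn.symm
  have key : φ.symm f = weightedHomogeneousComponent w g p := by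
    rw [φ.symm_apply_eq, ← hmap g, hf.weightedHomogeneousComponent_same]
  rw [hp, key]
  exact weightedHomogeneousComponent_isWeightedHomogeneous g p

end Graded

section Shear

lemma fin2_sub_ne (m : Fin 2) : 1 - m ≠ m := by fin_cases m <;> decide

lemma fin2_eq_of_ne {m k : Fin 2} (h : k ≠ m) : k = 1 - m := by fin_cases m <;> fin_cases k <;> simp_all

/-- The linear automorphism `X m ↦ c • X m + d • X (1-m)`, fixing the other variable. -/
noncomputable def shear (m : Fin 2) (c d : K) (hc : c ≠ 0) :
    MvPolynomial (Fin 2) K ≃ₐ[K] MvPolynomial (Fin 2) K :=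
  autOfSubst
    (fun k => if k = m then C c * X m + C d * X (1 - m) else X k)
    (fun k => if k = m then C c⁻¹ * X m - C (c⁻¹ * d) * X (1 - m) else X k)
    (by
      intro k
      by_cases hk : k = m
      · subst hk
        simp only [eq_self_iff_true, if_true, map_sub, map_add, map_mul, aeval_X, aeval_C,
          if_neg (fin2_sub_ne k), algebraMap_eq]
        have h1 : (C c⁻¹ : MvPolynomial (Fin 2) K) * C c = 1 := by
          rw [← C_mul, inv_mul_cancel₀ hc, C_1]
        have h2 : (C c⁻¹ : MvPolynomial (Fin 2) K) * C d = C (c⁻¹ * d) := by rw [← C_mul]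
        linear_combination (X k : MvPolynomial (Fin 2) K) * h1
      · simp [if_neg hk])
    (by
      intro k
      by_cases hk : k = m
      · subst hk
        simp only [eq_self_iff_true, if_true, map_sub, map_add, map_mul, aeval_X, aeval_C,
          if_neg (fin2_sub_ne k), algebraMap_eq]
        have h1 : (C c : MvPolynomial (Fin 2) K) * C c⁻¹ = 1 := by
          rw [← C_mul, mul_inv_cancel₀ hc, C_1]
        have h2 : (C c : MvPolynomial (Fin 2) K) * C (c⁻¹ * d) = C d := by
          rw [← C_mul, ← mul_assoc, mul_inv_cancel₀ hc, one_mul]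
        linear_combination ((X k : MvPolynomial (Fin 2) K) - C d * X (1 - k)) * h1
      · simp [if_neg hk])

lemma shear_X_self (m : Fin 2) (c d : K) (hc : c ≠ 0) :
    shear m c d hc (X m) = C c * X m + C d * X (1 - m) := by
  simp [shear]

lemma shear_X_other (m : Fin 2) (c d : K) (hc : c ≠ 0) {k : Fin 2} (hk : k ≠ m) :
    shear m c d hc (X k) = X k := by
  simp [shear, if_neg hk]

lemma shear_symm_X_self (m : Fin 2) (c d : K) (hc : c ≠ 0) :
    (shear m c d hc).symm (X m) = C c⁻¹ * X m - C (c⁻¹ * d) * X (1 - m) := by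
  simp [shear]

lemma shear_symm_X_other (m : Fin 2) (c d : K) (hc : c ≠ 0) {k : Fin 2} (hk : k ≠ m) :
    (shear m c d hc).symm (X k) = X k := by
  simp [shear, if_neg hk]

end Shear

section Linear

lemma isLinearAut'_mul {φ ψ : MvPolynomial (Fin 2) K ≃ₐ[K] MvPolynomial (Fin 2) K}
    (hφ : IsLinearAut φ) (hψ : IsLinearAut ψ) : IsLinearAut (φ * ψ) := by
  intro k
  obtain ⟨e, he⟩ := hψ k
  obtain ⟨f0, hf0⟩ := hφ 0
  obtain ⟨f1, hf1⟩ := hφ 1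
  refine ⟨fun l => e 0 * f0 l + e 1 * f1 l, ?_⟩
  rw [AlgEquiv.mul_apply, he]
  simp only [Fin.sum_univ_two, map_add, map_mul, algEquiv_C, hf0, hf1, C_add, C_mul]
  ring

lemma isLinearAut'_shear (m : Fin 2) (c d : K) (hc : c ≠ 0) :
    IsLinearAut (shear m c d hc) := by
  intro k
  by_cases hk : k = m
  · subst hk
    refine ⟨fun l => if l = k then c else d, ?_⟩
    rw [shear_X_self]
    fin_cases k <;> simp [Fin.sum_univ_two] <;> ring
  · refine ⟨fun l => if l = k then 1 else 0, ?_⟩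
    rw [shear_X_other _ _ _ _ hk]
    fin_cases k <;> simp [Fin.sum_univ_two]

lemma isLinearAut'_shear_symm (m : Fin 2) (c d : K) (hc : c ≠ 0) :
    IsLinearAut (shear m c d hc).symm := by
  intro k
  by_cases hk : k = m
  · subst hk
    refine ⟨fun l => if l = k then c⁻¹ else -(c⁻¹ * d), ?_⟩
    rw [shear_symm_X_self]
    fin_cases k <;> simp [Fin.sum_univ_two, map_neg, sub_eq_add_neg] <;> ring
  · refine ⟨fun l => if l = k then 1 else 0, ?_⟩
    rw [shear_symm_X_other _ _ _ _ hk]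
    fin_cases k <;> simp [Fin.sum_univ_two]

end Linear

section Key

lemma algEquiv_eq_aeval (φ : MvPolynomial (Fin 2) K ≃ₐ[K] MvPolynomial (Fin 2) K)
    (p : MvPolynomial (Fin 2) K) : φ p = aeval (fun k => φ (X k)) p :=
  AlgHom.congr_fun (aeval_unique φ.toAlgHom) p

lemma aeval_congr_vars {f g : Fin 2 → MvPolynomial (Fin 2) K} {p : MvPolynomial (Fin 2) K}
    (h : ∀ k ∈ p.vars, f k = g k) : aeval f p = aeval g p := by
  apply hom_congr_vars (f₁ := (aeval f : MvPolynomial (Fin 2) K →ₐ[K] MvPolynomial (Fin 2) K).toRingHom)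
    (f₂ := (aeval g : MvPolynomial (Fin 2) K →ₐ[K] MvPolynomial (Fin 2) K).toRingHom)
  · ext x
    simp
  · intro k hk _
    simpa using h k hk
  · rfl

lemma key (w : Fin 2 → G) (ξ₁ ξ₂ : MvPolynomial (Fin 2) K ≃ₐ[K] MvPolynomial (Fin 2) K)
    (hg1 : IsGraded w ξ₁) (hg2 : IsGraded w ξ₂) (hl2 : IsLinearAut ξ₂)
    (i : Fin 2) (F : MvPolynomial (Fin 2) K) (hiF : i ∉ F.vars)
    (hXi : ξ₁ (X i) = X i + F) (hXo : ξ₁ (X (1 - i)) = X (1 - i))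
    (m : Fin 2) (c d : K) (hc : c ≠ 0)
    (hY : ξ₂ (X (1 - i)) = C c * X m + C d * X (1 - m))
    (a b : K) (hab : ξ₂ (C a * X i + C b * X (1 - i)) = X (1 - m)) :
    ∃ ζ₀ ζ₁ : MvPolynomial (Fin 2) K ≃ₐ[K] MvPolynomial (Fin 2) K,
      (IsGraded w ζ₀ ∧ IsLinearAut ζ₀) ∧
      (IsGraded w ζ₁ ∧ IsElementary ζ₁) ∧
      IsGraded w (shear m c d hc) ∧
      ξ₂ * ξ₁ = shear m c d hc * ζ₁ * ζ₀ := by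
  set N := shear m c d hc with hN
  have hmm : (1 : Fin 2) - m ≠ m := fin2_sub_ne m
  have hNm : N (X m) = ξ₂ (X (1 - i)) := by rw [hY, hN, shear_X_self]
  have hNo : N (X (1 - m)) = X (1 - m) := shear_X_other m c d hc hmm
  -- the shear is graded
  have h1 : IsWeightedHomogeneous w (ξ₂ (X (1 - i))) (w (1 - i)) :=
    hg2 _ _ (isWeightedHomogeneous_X K w (1 - i))
  have hwe : w m = w (1 - i) := by
    have hco : coeff (Finsupp.single m 1) (ξ₂ (X (1 - i))) ≠ 0 := by
      rw [hY, coeff_add, coeff_C_mul, coeff_C_mul, coeff_X, coeff_X',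
        if_neg (fun hyp => hmm (Finsupp.single_left_injective one_ne_zero hyp))]
      simpa using hc
    have h2 := h1 hco
    rw [← h2, Finsupp.weight_apply, Finsupp.sum_single_index] <;> simp
  have hNg : IsGraded w N := by
    apply isGraded'_of_X
    intro k
    by_cases hk : k = m
    · subst hk
      rw [hNm, hwe]
      exact h1
    · rw [shear_X_other m c d hc hk]
      exact isWeightedHomogeneous_X K w k
  -- the data
  set F' : MvPolynomial (Fin 2) K := rename (fun _ => m) F with hF'
  refine ⟨N.symm * ξ₂, N.symm * ξ₂ * ξ₁ * ξ₂.symm * N, ⟨?_, ?_⟩, ⟨?_, ?_⟩, hNg, ?_⟩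
  · exact isGraded'_mul (isGraded'_symm hNg) hg2
  · exact isLinearAut'_mul (isLinearAut'_shear_symm m c d hc) hl2
  · exact isGraded'_mul (isGraded'_mul (isGraded'_mul (isGraded'_mul
      (isGraded'_symm hNg) hg2) hg1) (isGraded'_symm hg2)) hNg
  · -- elementary
    have hζ₁m : (N.symm * ξ₂ * ξ₁ * ξ₂.symm * N) (X m) = X m := by
      simp only [AlgEquiv.mul_apply]
      rw [hNm, ξ₂.symm_apply_apply, hXo, ← hNm, N.symm_apply_apply]
    have hξ₂F : ξ₂ F = N F' := by
      have e1 : ξ₂ F = aeval (fun _ => ξ₂ (X (1 - i))) F := by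
        rw [algEquiv_eq_aeval ξ₂ F]
        apply aeval_congr_vars
        intro k hk
        have : k ≠ i := fun h => hiF (h ▸ hk)
        rw [fin2_eq_of_ne this]
      have e2 : N F' = aeval (fun _ => ξ₂ (X (1 - i))) F := by
        rw [hF', algEquiv_eq_aeval N, aeval_rename]
        apply aeval_congr_vars
        intro k _
        simp only [Function.comp_apply]
        rw [hNm]
      rw [e1, e2]
    have hζ₁o : (N.symm * ξ₂ * ξ₁ * ξ₂.symm * N) (X (1 - m)) = X (1 - m) + C a * F' := by
      simp only [AlgEquiv.mul_apply]
      rw [hNo]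
      have hsymm : ξ₂.symm (X (1 - m)) = C a * X i + C b * X (1 - i) := by
        rw [← hab, ξ₂.symm_apply_apply]
      rw [hsymm, map_add, map_mul, map_mul, algEquiv_C, algEquiv_C, hXi, hXo]
      have : C a * (X i + F) + C b * X (1 - i)
          = (C a * X i + C b * X (1 - i)) + C a * F := by ring
      rw [this, map_add, hab, map_mul, algEquiv_C, hξ₂F, map_add, map_mul, algEquiv_C,
        N.symm_apply_apply]
      rw [shear_symm_X_other m c d hc hmm]
    refine ⟨1 - m, C a * F', ?_, hζ₁o, ?_⟩
    · by_cases ha : a = 0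
      · subst ha
        simp
      · rw [vars_C_mul a ha]
        intro hmem
        obtain ⟨k, _, hk⟩ := mem_vars_rename (fun _ => m) F (by simpa [hF'] using hmem)
        exact hmm hk.symm
    · intro k hk
      rw [show k = m from by
        have := fin2_eq_of_ne (m := 1 - m) hk
        simpa using this]
      exact hζ₁m
  · have hsy : ∀ φ : MvPolynomial (Fin 2) K ≃ₐ[K] MvPolynomial (Fin 2) K, φ.symm = φ⁻¹ :=
      fun _ => rfl
    rw [hsy, hsy]
    group

end Key

end AuxLemmas

/-- Let `ξ₁` be a graded elementary automorphism of `K[u,v]` and `ξ₂` a graded linear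
automorphism. Then `ξ₂ ∘ ξ₁ = ζ₂ ∘ ζ₁ ∘ ζ₀`, where `ζ₀, ζ₂` are graded linear
automorphisms, `ζ₁` is a graded elementary automorphism, and `ζ₂(u) = λ u` with
`λ ≠ 0`. Here `u = X 0`, `v = X 1`, and `*` is composition. -/
theorem linear_after_elementary_decomposition
    {K : Type*} [Field K] [IsAlgClosed K] [CharZero K]
    {G : Type*} [AddCommGroup G] (w : Fin 2 → G)
    (ξ₁ ξ₂ : MvPolynomial (Fin 2) K ≃ₐ[K] MvPolynomial (Fin 2) K)
    (h₁ : IsGraded w ξ₁ ∧ IsElementary ξ₁)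
    (h₂ : IsGraded w ξ₂ ∧ IsLinearAut ξ₂) :
    ∃ ζ₀ ζ₁ ζ₂ : MvPolynomial (Fin 2) K ≃ₐ[K] MvPolynomial (Fin 2) K,
      (IsGraded w ζ₀ ∧ IsLinearAut ζ₀) ∧
      (IsGraded w ζ₁ ∧ IsElementary ζ₁) ∧
      (IsGraded w ζ₂ ∧ IsLinearAut ζ₂) ∧
      (∃ l : K, l ≠ 0 ∧ ζ₂ (X 0) = C l * X 0) ∧
      ξ₂ * ξ₁ = ζ₂ * ζ₁ * ζ₀ := by
  have hg1 := h₁.1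
  obtain ⟨i, F, hiF, hXi, hXfix⟩ := h₁.2
  obtain ⟨hg2, hl2⟩ := h₂
  have hXo : ξ₁ (X (1 - i)) = X (1 - i) := hXfix _ (fin2_sub_ne i)
  obtain ⟨ci, hci⟩ := hl2 i
  obtain ⟨cj, hcj⟩ := hl2 (1 - i)
  rw [Fin.sum_univ_two] at hci hcj
  set p := ci 0 with hp
  set q := ci 1 with hq
  set r := cj 0 with hr
  set s := cj 1 with hsdef
  have hC2 : ∀ a : K, ξ₂ (C a) = C a := algEquiv_C ξ₂
  set Δ := p * s - q * r with hΔdef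
  have hii : i ∉ ({1 - i} : Finset (Fin 2)) := by
    simp [Finset.mem_singleton, Ne.symm (fin2_sub_ne i)]
  have hΔ : Δ ≠ 0 := by
    intro h0
    have hs0 : s = 0 := by
      have hcc : (C s * C p : MvPolynomial (Fin 2) K) = C q * C r := by
        rw [← C_mul, ← C_mul]
        congr 1
        linear_combination h0
      have e1 : ξ₂ (C s * X i - C q * X (1 - i)) = 0 := by
        rw [map_sub, map_mul, map_mul, hC2, hC2, hci, hcj]
        linear_combination (X 0 : MvPolynomial (Fin 2) K) * hcc
      have e2 : C s * X i - C q * X (1 - i) = (0 : MvPolynomial (Fin 2) K) :=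
        ξ₂.injective (by rw [e1, map_zero])
      have := congrArg (coeff (Finsupp.single i 1)) e2
      simpa [coeff_sub, coeff_C_mul, coeff_X, coeff_X',
        if_neg (fun hyp => (fin2_sub_ne i) (Finsupp.single_left_injective one_ne_zero hyp))]
        using this
    have hr0 : r = 0 := by
      have hcc : (C r * C q : MvPolynomial (Fin 2) K) = C p * C s := by
        rw [← C_mul, ← C_mul]
        congr 1
        linear_combination -h0
      have e1 : ξ₂ (C r * X i - C p * X (1 - i)) = 0 := by
        rw [map_sub, map_mul, map_mul, hC2, hC2, hci, hcj]
        linear_combination (X 1 : MvPolynomial (Fin 2) K) * hcc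
      have e2 : C r * X i - C p * X (1 - i) = (0 : MvPolynomial (Fin 2) K) :=
        ξ₂.injective (by rw [e1, map_zero])
      have := congrArg (coeff (Finsupp.single i 1)) e2
      simpa [coeff_sub, coeff_C_mul, coeff_X, coeff_X',
        if_neg (fun hyp => (fin2_sub_ne i) (Finsupp.single_left_injective one_ne_zero hyp))]
        using this
    have e3 : ξ₂ (X (1 - i)) = 0 := by rw [hcj, hs0, hr0]; simp
    have e4 : (X (1 - i) : MvPolynomial (Fin 2) K) = 0 :=
      ξ₂.injective (by rw [e3, map_zero])
    exact X_ne_zero _ e4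
  by_cases hs : s = 0
  · -- case B : m = 0, c = r
    have hrne : r ≠ 0 := by
      intro h
      apply hΔ
      rw [hΔdef, hs, h]
      ring
    obtain ⟨ζ₀, ζ₁, hζ₀, hζ₁, hgN, heq⟩ :=
      key w ξ₁ ξ₂ hg1 hg2 hl2 i F hiF hXi hXo 0 r s hrne
        (by rw [show (1 : Fin 2) - 0 = 1 from rfl]; exact hcj)
        (-(r/Δ)) (p/Δ)
        (by
          rw [map_add, map_mul, map_mul, hC2, hC2, hci, hcj,
            show (1 : Fin 2) - 0 = 1 from rfl]
          have hA : (C (-(r/Δ)) * C p + C (p/Δ) * C r : MvPolynomial (Fin 2) K) = 0 := by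
            rw [← C_mul, ← C_mul, ← C_add, ← C_0]
            congr 1
            field_simp
            ring
          have hB : (C (-(r/Δ)) * C q + C (p/Δ) * C s : MvPolynomial (Fin 2) K) = 1 := by
            rw [← C_mul, ← C_mul, ← C_add, ← C_1]
            congr 1
            field_simp
            linear_combination -hΔdef
          linear_combination (X 0 : MvPolynomial (Fin 2) K) * hA
            + (X 1 : MvPolynomial (Fin 2) K) * hB)
    refine ⟨ζ₀, ζ₁, shear 0 r s hrne, hζ₀, hζ₁,
      ⟨hgN, isLinearAut'_shear 0 r s hrne⟩, ⟨r, hrne, ?_⟩, heq⟩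
    rw [shear_X_self, hs]
    simp
  · -- case A : m = 1, c = s
    obtain ⟨ζ₀, ζ₁, hζ₀, hζ₁, hgN, heq⟩ :=
      key w ξ₁ ξ₂ hg1 hg2 hl2 i F hiF hXi hXo 1 s r hs
        (by rw [show (1 : Fin 2) - 1 = 0 from rfl]; rw [hcj]; ring)
        (s/Δ) (-(q/Δ))
        (by
          rw [map_add, map_mul, map_mul, hC2, hC2, hci, hcj,
            show (1 : Fin 2) - 1 = 0 from rfl]
          have hA : (C (s/Δ) * C p + C (-(q/Δ)) * C r : MvPolynomial (Fin 2) K) = 1 := by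
            rw [← C_mul, ← C_mul, ← C_add, ← C_1]
            congr 1
            field_simp
            linear_combination hΔdef
          have hB : (C (s/Δ) * C q + C (-(q/Δ)) * C s : MvPolynomial (Fin 2) K) = 0 := by
            rw [← C_mul, ← C_mul, ← C_add, ← C_0]
            congr 1
            field_simp
            ring
          linear_combination (X 0 : MvPolynomial (Fin 2) K) * hA
            + (X 1 : MvPolynomial (Fin 2) K) * hB)
    refine ⟨ζ₀, ζ₁, shear 1 s r hs, hζ₀, hζ₁,
      ⟨hgN, isLinearAut'_shear 1 s r hs⟩, ⟨1, one_ne_zero, ?_⟩, heq⟩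
    rw [shear_X_other 1 s r hs (by decide), C_1, one_mul]
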